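/- Noisy d-tilted information and dispersion for erased fair coin flips: in the erased-fair-coin-flips setting with δ/2 < d < 1/2 and λ* = −R′(d) = log( (1 − δ/2 − d)/(d − δ/2) ), the noisy d-tilted information ȷ̃_{S,X}(S, X, d) equals −λ*·d plus a random variable taking the value log( 2/(1 + exp(−λ*)) ) with probability 1 − δ (no erasure), the value λ* with probability δ/2 (erasure and reproduction disagrees with S), and the value 0 with probability δ/2 (erasure and reproduction agrees with S); consequently the noisy rate-dispersion function equals Ṽ(d) = δ(1 − δ)·log²cosh( λ*/(2 log e) ) + (δ/4)·(λ*)². -/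

import Mathlib

open scoped BigOperators

noncomputable section

/-- `p` is a probability mass function on a finite type. -/
def IsPMF {α : Type*} [Fintype α] (p : α → ℝ) : Prop :=
  (∀ a, 0 ≤ p a) ∧ ∑ a, p a = 1

/-- Equiprobable binary source. -/
def PSb : Bool → ℝ := fun _ => 1 / 2

/-- Binary erasure channel with erasure rate `δ`; `none` is the erasure symbol `?`. -/
def Wbec (δ : ℝ) : Bool → Option Bool → ℝ :=
  fun s x => if x = some s then 1 - δ else if x = none then δ else 0

/-- Bit-error (Hamming) distortion measured against the clean source. -/
def dstH : Bool → Bool → ℝ := fun s z => if s = z then 0 else 1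

/-- Distribution of the channel output `X`. -/
def PXbec (δ : ℝ) (x : Option Bool) : ℝ := ∑ s, PSb s * Wbec δ s x

/-- The optimal backward channel `P_{X|Z*}`. -/
def backB (δ d : ℝ) : Bool → Option Bool → ℝ :=
  fun b x => if x = some b then 1 - d - δ / 2 else if x = none then δ else d - δ / 2

/-- The optimal forward test channel `Q*(z|x) = P_{Z*}(z) P_{X|Z*}(x|z) / P_X(x)`. -/
def QstBes (δ d : ℝ) : Option Bool → Bool → ℝ :=
  fun x z => (1 / 2 * backB δ d z x) / PXbec δ x

/-- Output marginal of the optimal test channel. -/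
def PZstBes (δ d : ℝ) (z : Bool) : ℝ := ∑ x, PXbec δ x * QstBes δ d x z

/-- Information density `ı_{X;Z*}(x; z) = log (Q*(z|x) / P_{Z*}(z))`. -/
def iXZ (δ d : ℝ) (x : Option Bool) (z : Bool) : ℝ :=
  Real.log (QstBes δ d x z / PZstBes δ d z)

/-- Noisy d-tilted information evaluated with the optimal reproduction:
`ȷ̃ = ı_{X;Z*}(x;z) + λ* dstH(s,z) − λ* d`. -/
def jtBes (δ d lam : ℝ) (s : Bool) (x : Option Bool) (z : Bool) : ℝ :=
  iXZ δ d x z + lam * dstH s z - lam * d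

/-- Joint mass of `(S, X, Z*)` under `PSb ⊗ Wbec δ ⊗ QstBes δ d`. -/
def massBes (δ d : ℝ) (s : Bool) (x : Option Bool) (z : Bool) : ℝ :=
  PSb s * Wbec δ s x * QstBes δ d x z

/-- **Noisy d-tilted information and dispersion for erased fair coin flips**
(Eqs. (44)–(46)): with `λ* = −R′(d) = log((1 − δ/2 − d)/(d − δ/2))`, the noisy d-tilted
information equals `−λ* d` plus `log(2/(1+e^{−λ*}))` with probability `1−δ` (no erasure),
`λ*` with probability `δ/2` (erasure, reproduction disagrees with `S`), and `0` with
probability `δ/2` (erasure, reproduction agrees with `S`); consequently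
`Ṽ(d) = δ(1−δ) log² cosh(λ*/(2 log e)) + (δ/4) (λ*)²`. -/
theorem tilted_information_dispersion_erased_fair_coin_flips
    (δ d : ℝ) (hδ0 : 0 < δ) (hδ1 : δ < 1)
    (hd1 : δ / 2 < d) (hd2 : d < 1 / 2)
    (lam : ℝ) (hlam : lam = Real.log ((1 - δ / 2 - d) / (d - δ / 2))) :
    -- value log(2/(1+exp(−λ*))) − λ* d, w.p. 1−δ (no erasure)
    (∑ s, ∑ x, ∑ z, massBes δ d s x z *
        (if x ≠ none ∧
            jtBes δ d lam s x z = -lam * d + Real.log (2 / (1 + Real.exp (-lam)))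
         then (1:ℝ) else 0)) = 1 - δ ∧
    -- value λ* − λ* d, w.p. δ/2 (erasure and reproduction disagrees with S)
    (∑ s, ∑ x, ∑ z, massBes δ d s x z *
        (if x = none ∧ s ≠ z ∧ jtBes δ d lam s x z = -lam * d + lam
         then (1:ℝ) else 0)) = δ / 2 ∧
    -- value 0 − λ* d, w.p. δ/2 (erasure and reproduction agrees with S)
    (∑ s, ∑ x, ∑ z, massBes δ d s x z *
        (if x = none ∧ s = z ∧ jtBes δ d lam s x z = -lam * d
         then (1:ℝ) else 0)) = δ / 2 ∧
    -- the noisy rate-dispersion function Ṽ(d) = Var[ȷ̃]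
    (∑ s, ∑ x, ∑ z, massBes δ d s x z * (jtBes δ d lam s x z) ^ 2)
        - (∑ s, ∑ x, ∑ z, massBes δ d s x z * jtBes δ d lam s x z) ^ 2
      = δ * (1 - δ) * Real.log (Real.cosh (lam / (2 * Real.log (Real.exp 1)))) ^ 2
        + δ / 4 * lam ^ 2 := by
  have hp : (0:ℝ) < d - δ / 2 := by linarith
  have hq : (0:ℝ) < 1 - δ / 2 - d := by linarith
  have h1δ : (0:ℝ) < 1 - δ := by linarith
  have h1δ' : (1:ℝ) - δ ≠ 0 := ne_of_gt h1δ
  have hδ' : δ ≠ 0 := ne_of_gt hδ0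
  have hexp : Real.exp (-lam) = (d - δ / 2) / (1 - δ / 2 - d) := by
    rw [hlam, ← Real.log_inv, Real.exp_log]
    · rw [inv_div]
    · rw [inv_div]; positivity
  have hepos : (0:ℝ) < 1 + Real.exp (-lam) := by positivity
  -- value lemmas for the marginals and test channel
  have hp' : d - δ / 2 ≠ 0 := ne_of_gt hp
  have hq' : 1 - δ / 2 - d ≠ 0 := ne_of_gt hq
  have hp2 : 2 * d - δ ≠ 0 := by intro h; apply hp'; linarith
  have hq2 : (2:ℝ) - δ - 2 * d ≠ 0 := by intro h; apply hq'; linarith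
  have hq3 : (2:ℝ) - 2 * d - δ ≠ 0 := by intro h; apply hq'; linarith
  have hPXs : ∀ b, PXbec δ (some b) = (1 - δ) / 2 := by
    intro b
    cases b <;> (rw [PXbec, Fintype.sum_bool] <;> simp [PSb, Wbec] <;> try ring)
  have hPXn : PXbec δ none = δ := by
    rw [PXbec, Fintype.sum_bool]; simp [PSb, Wbec]; try ring
  have hQn : ∀ z, QstBes δ d none z = 1 / 2 := by
    intro z
    simp [QstBes, backB, hPXn]
    field_simp [h1δ', hδ', hp', hq', hp2, hq2, hq3]
    try ring
  have hQeq : ∀ b, QstBes δ d (some b) b = (1 - d - δ / 2) / (1 - δ) := by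
    intro b
    simp [QstBes, backB, hPXs]
    field_simp [h1δ', hδ', hp', hq', hp2, hq2, hq3]
  have hQtf : QstBes δ d (some true) false = (d - δ / 2) / (1 - δ) := by
    simp [QstBes, backB, hPXs]
    field_simp [h1δ', hδ', hp', hq', hp2, hq2, hq3]
  have hQft : QstBes δ d (some false) true = (d - δ / 2) / (1 - δ) := by
    simp [QstBes, backB, hPXs]
    field_simp [h1δ', hδ', hp', hq', hp2, hq2, hq3]
  have hPZ : ∀ z, PZstBes δ d z = 1 / 2 := by
    intro z
    rw [PZstBes, Fintype.sum_option, Fintype.sum_bool, hPXn, hQn]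
    cases z <;> simp [hPXs, hQeq, hQtf, hQft] <;> field_simp [h1δ', hδ', hp', hq', hp2, hq2, hq3] <;> ring
  -- information density values
  have hiXZn : ∀ z, iXZ δ d none z = 0 := by
    intro z; rw [iXZ, hQn, hPZ]; simp
  have hA : Real.log (2 / (1 + Real.exp (-lam))) = Real.log (2 * (1 - δ / 2 - d) / (1 - δ)) := by
    have h2 : (1 - δ) / (1 - δ / 2 - d) = 1 + (d - δ / 2) / (1 - δ / 2 - d) := by
      rw [show (1:ℝ) - δ = (1 - δ / 2 - d) + (d - δ / 2) by ring, add_div, div_self hq']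
    rw [hexp, ← h2, div_div_eq_mul_div]
  have hiXZeq : ∀ b, iXZ δ d (some b) b = Real.log (2 / (1 + Real.exp (-lam))) := by
    intro b
    rw [iXZ, hQeq, hPZ, hA]
    congr 1
    field_simp [h1δ', hδ', hp', hq', hp2, hq2, hq3]; ring
  have hB : Real.log ((d - δ / 2) / (1 - δ) / (1 / 2))
      = Real.log (2 / (1 + Real.exp (-lam))) - lam := by
    have h1 : (d - δ / 2) / (1 - δ) / (1 / 2)
        = (2 * (1 - δ / 2 - d) / (1 - δ)) * ((d - δ / 2) / (1 - δ / 2 - d)) := by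
      rw [div_mul_div_comm, show 2 * (1 - δ / 2 - d) * (d - δ / 2) = (2 * (d - δ / 2)) * (1 - δ / 2 - d) by ring, mul_div_mul_right _ _ hq']; ring
    rw [h1, Real.log_mul (by positivity) (by positivity), hA, hlam,
      Real.log_div (ne_of_gt hp) (ne_of_gt hq), Real.log_div (ne_of_gt hq) (ne_of_gt hp)]
    ring
  have hiXZtf : iXZ δ d (some true) false = Real.log (2 / (1 + Real.exp (-lam))) - lam := by
    rw [iXZ, hQtf, hPZ, hB]
  have hiXZft : iXZ δ d (some false) true = Real.log (2 / (1 + Real.exp (-lam))) - lam := by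
    rw [iXZ, hQft, hPZ, hB]
  -- tilted information values
  have hjt1 : ∀ s z, jtBes δ d lam s (some s) z
      = -lam * d + Real.log (2 / (1 + Real.exp (-lam))) := by
    intro s z
    cases s <;> cases z <;>
      simp [jtBes, dstH, hiXZeq, hiXZtf, hiXZft] <;> ring
  have hjtn : ∀ s z, jtBes δ d lam s none z = lam * dstH s z - lam * d := by
    intro s z; rw [jtBes, hiXZn]; ring
  have hjtne : ∀ s z, s ≠ z → jtBes δ d lam s none z = -lam * d + lam := by
    intro s z hsz
    rw [hjtn, dstH]
    simp [hsz]; ring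
  have hjteq : ∀ s, jtBes δ d lam s none s = -lam * d := by
    intro s; rw [hjtn, dstH]; simp
  have hcosh : Real.log (Real.cosh (lam / (2 * Real.log (Real.exp 1))))
      = lam / 2 - Real.log (2 / (1 + Real.exp (-lam))) := by
    rw [Real.log_exp]
    have h1 : Real.cosh (lam / (2 * 1)) = Real.exp (lam / 2) * (1 + Real.exp (-lam)) / 2 := by
      rw [show lam / (2 * 1) = lam / 2 by ring, Real.cosh_eq,
        show -(lam / 2) = lam / 2 + -lam by ring, Real.exp_add]
      ring
    rw [h1, Real.log_div (by positivity) two_ne_zero,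
      Real.log_mul (Real.exp_ne_zero _) (ne_of_gt hepos), Real.log_exp,
      Real.log_div two_ne_zero (ne_of_gt hepos)]
    ring
  have expand : ∀ f : Bool → Option Bool → Bool → ℝ,
      (∑ s, ∑ x, ∑ z, f s x z)
      = ((f true none true + f true none false)
          + ((f true (some true) true + f true (some true) false)
            + (f true (some false) true + f true (some false) false)))
        + ((f false none true + f false none false)
          + ((f false (some true) true + f false (some true) false)
            + (f false (some false) true + f false (some false) false))) := by
    intro f
    simp only [Fintype.sum_bool, Fintype.sum_option]
  have hmass_n : ∀ s z, massBes δ d s none z = δ / 4 := by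
    intro s z
    rw [massBes, hQn]
    simp [PSb, Wbec]
    ring
  have hmass_eq : ∀ s, massBes δ d s (some s) s = (1 - d - δ / 2) / 2 := by
    intro s
    rw [massBes, hQeq]
    simp [PSb, Wbec]
    field_simp [h1δ']
  have hmass_tf : massBes δ d true (some true) false = (d - δ / 2) / 2 := by
    rw [massBes, hQtf]
    simp [PSb, Wbec]
    field_simp [h1δ']
  have hmass_ft : massBes δ d false (some false) true = (d - δ / 2) / 2 := by
    rw [massBes, hQft]
    simp [PSb, Wbec]
    field_simp [h1δ']
  have hmass_0 : ∀ s b z, b ≠ s → massBes δ d s (some b) z = 0 := by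
    intro s b z hbs
    rw [massBes, Wbec]
    simp [hbs]
  refine ⟨?_, ?_, ?_, ?_⟩
  · rw [expand]
    rw [hmass_eq true, hmass_eq false, hmass_tf, hmass_ft,
      hmass_0 true false _ (by simp), hmass_0 true false _ (by simp),
      hmass_0 false true _ (by simp), hmass_0 false true _ (by simp),
      hjt1 true true, hjt1 true false, hjt1 false true, hjt1 false false]
    simp
    ring
  · rw [expand]
    rw [hmass_n, hmass_n, hmass_n, hmass_n,
      hmass_0 true false _ (by simp), hmass_0 true false _ (by simp),
      hmass_0 false true _ (by simp), hmass_0 false true _ (by simp),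
      hjtne true false (by simp), hjtne false true (by simp),
      hjteq true, hjteq false]
    simp
    ring
  · rw [expand]
    rw [hmass_n, hmass_n, hmass_n, hmass_n,
      hmass_0 true false _ (by simp), hmass_0 true false _ (by simp),
      hmass_0 false true _ (by simp), hmass_0 false true _ (by simp),
      hjtne true false (by simp), hjtne false true (by simp),
      hjteq true, hjteq false]
    simp
    ring
  · rw [expand, expand]
    rw [hmass_eq true, hmass_eq false, hmass_tf, hmass_ft,
      hmass_0 true false _ (by simp), hmass_0 true false _ (by simp),
      hmass_0 false true _ (by simp), hmass_0 false true _ (by simp),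
      hmass_n, hmass_n, hmass_n, hmass_n,
      hjt1 true true, hjt1 true false, hjt1 false true, hjt1 false false,
      hjtne true false (by simp), hjtne false true (by simp),
      hjteq true, hjteq false, hcosh]
    ring
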